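/- Let n ≥ 1, let M ∈ ℝ^{n×n} be a symmetric positive semidefinite matrix, and let J = {J_1, …, J_t} be a partition of {1,…,n} such that for every q, q' ∈ {1,…,t}, the sum ∑_{j'∈J_{q'}} M_{jj'} takes the same value for all j ∈ J_q. Then for every x ∈ ℝ^n, the J-average x̂ of x is a global minimizer of the problem: minimize (1/2) zᵀMz over z ∈ ℝ^n subject to ∑_{j∈J_q} z_j = ∑_{j∈J_q} x_j for every q = 1,…,t; that is, every z ∈ ℝ^n satisfying these t linear equations has (1/2) zᵀMz ≥ (1/2) x̂ᵀMx̂. -/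

import Mathlib

open Matrix

/-- The `J`-average of a vector `x`, where the partition of `{1,…,n}` is encoded by a
surjective map `π : Fin n → Fin t` (the class `J_q` is the fiber `π ⁻¹ {q}`):
`x̂ j = (1/|J_{π j}|) ∑_{j' ∈ J_{π j}} x j'`. -/
noncomputable def Javg {n t : ℕ} (π : Fin n → Fin t) (x : Fin n → ℝ) : Fin n → ℝ :=
  fun j => (∑ j' ∈ Finset.univ.filter (fun j' => π j' = π j), x j') /
    ((Finset.univ.filter (fun j' => π j' = π j)).card : ℝ)

/-- If `M` is symmetric positive semidefinite and, for every pair of classes `J_q, J_{q'}`,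
the row sums `∑_{j'∈J_{q'}} M j j'` are constant over `j ∈ J_q`, then for every `x`, the
`J`-average `x̂` of `x` is a global minimizer of `(1/2) zᵀMz` subject to the constraints
`∑_{j∈J_q} z_j = ∑_{j∈J_q} x_j` for each class `J_q`. -/
theorem javg_minimizes_quadratic_subproblem {n t : ℕ} (hn : 1 ≤ n)
    (π : Fin n → Fin t) (hπ : Function.Surjective π)
    (M : Matrix (Fin n) (Fin n) ℝ) (hM : M.PosSemidef)
    (hMsum : ∀ (q' : Fin t) (j j₂ : Fin n), π j = π j₂ →
      ∑ j' ∈ Finset.univ.filter (fun j' => π j' = q'), M j j' =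
      ∑ j' ∈ Finset.univ.filter (fun j' => π j' = q'), M j₂ j')
    (x : Fin n → ℝ) :
    ∀ z : Fin n → ℝ,
      (∀ q : Fin t, ∑ j ∈ Finset.univ.filter (fun j => π j = q), z j =
        ∑ j ∈ Finset.univ.filter (fun j => π j = q), x j) →
      (1 / 2) * ((Javg π x) ⬝ᵥ M.mulVec (Javg π x)) ≤ (1 / 2) * (z ⬝ᵥ M.mulVec z) := by
  classical
  intro z hz
  set y : Fin n → ℝ := Javg π x with hy
  set d : Fin n → ℝ := z - y with hd
  -- average value of x on a fiber
  set A : Fin t → ℝ := fun q =>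
    (∑ j' ∈ Finset.univ.filter (fun j' => π j' = q), x j') /
    ((Finset.univ.filter (fun j' => π j' = q)).card : ℝ) with hA
  have hyval : ∀ j : Fin n, y j = A (π j) := fun j => rfl
  -- fibers are nonempty
  have hfib : ∀ q : Fin t, (Finset.univ.filter (fun j => π j = q)).Nonempty := by
    intro q
    obtain ⟨j, hj⟩ := hπ q
    exact ⟨j, by simp [hj]⟩
  -- sum of y over a fiber equals sum of x over it
  have hysum : ∀ q : Fin t, ∑ j ∈ Finset.univ.filter (fun j => π j = q), y j =
      ∑ j ∈ Finset.univ.filter (fun j => π j = q), x j := by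
    intro q
    have hcard : ((Finset.univ.filter (fun j => π j = q)).card : ℝ) ≠ 0 := by
      exact_mod_cast Finset.card_ne_zero_of_mem (hfib q).choose_spec
    calc ∑ j ∈ Finset.univ.filter (fun j => π j = q), y j
        = ∑ _j ∈ Finset.univ.filter (fun j => π j = q), A q := by
          apply Finset.sum_congr rfl
          intro j hj
          have hjq : π j = q := by simpa using hj
          rw [hyval j, hjq]
      _ = _ := by
          rw [Finset.sum_const, nsmul_eq_mul, hA]
          field_simp
  -- d sums to zero on each fiber
  have hdsum : ∀ q : Fin t, ∑ j ∈ Finset.univ.filter (fun j => π j = q), d j = 0 := by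
    intro q
    simp only [hd, Pi.sub_apply, Finset.sum_sub_distrib, hz q, hysum q, sub_self]
  -- M.mulVec y is constant on fibers
  have key : ∀ j : Fin n, M.mulVec y j =
      ∑ q' : Fin t, (∑ j' ∈ Finset.univ.filter (fun j' => π j' = q'), M j j') * A q' := by
    intro j
    rw [Matrix.mulVec, dotProduct,
      ← Finset.sum_fiberwise (g := π) (s := Finset.univ) (f := fun j' => M j j' * y j')]
    apply Finset.sum_congr rfl
    intro q' _
    rw [Finset.sum_mul]
    apply Finset.sum_congr rfl
    intro j' hj'
    have hj'q : π j' = q' := by simpa using hj'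
    rw [hyval j', hj'q]
  have hMy : ∀ j j₂ : Fin n, π j = π j₂ → M.mulVec y j = M.mulVec y j₂ := by
    intro j j₂ hjj
    rw [key j, key j₂]
    exact Finset.sum_congr rfl fun q' _ => by rw [hMsum q' j j₂ hjj]
  -- d ⬝ᵥ M.mulVec y = 0
  have hdMy : d ⬝ᵥ M.mulVec y = 0 := by
    choose rep hrep using hπ
    have hsplit : d ⬝ᵥ M.mulVec y = ∑ q : Fin t,
        ∑ j ∈ Finset.univ.filter (fun j => π j = q), d j * M.mulVec y j := by
      rw [dotProduct,
        ← Finset.sum_fiberwise (g := π) (s := Finset.univ)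
          (f := fun j => d j * M.mulVec y j)]
    rw [hsplit]
    apply Finset.sum_eq_zero
    intro q _
    calc ∑ j ∈ Finset.univ.filter (fun j => π j = q), d j * M.mulVec y j
        = ∑ j ∈ Finset.univ.filter (fun j => π j = q), d j * M.mulVec y (rep q) := by
          apply Finset.sum_congr rfl
          intro j hj
          have hjq : π j = q := by simpa using hj
          rw [hMy j (rep q) (by rw [hjq, hrep q])]
      _ = (∑ j ∈ Finset.univ.filter (fun j => π j = q), d j) * M.mulVec y (rep q) := by
          rw [Finset.sum_mul]
      _ = 0 := by rw [hdsum q, zero_mul]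
  -- symmetry
  have hsymm : Mᵀ = M := hM.1
  have hyMd : y ⬝ᵥ M.mulVec d = 0 := by
    rw [Matrix.dotProduct_mulVec, ← Matrix.mulVec_transpose, hsymm, dotProduct_comm]
    exact hdMy
  -- psd
  have hdMd : 0 ≤ d ⬝ᵥ M.mulVec d := by
    have := hM.dotProduct_mulVec_nonneg d
    simpa using this
  -- expand
  have hzyd : z = y + d := by rw [hd]; ring
  have hexp : z ⬝ᵥ M.mulVec z = y ⬝ᵥ M.mulVec y + (y ⬝ᵥ M.mulVec d + d ⬝ᵥ M.mulVec y)
      + d ⬝ᵥ M.mulVec d := by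
    rw [hzyd, Matrix.mulVec_add, add_dotProduct, dotProduct_add,
      dotProduct_add]
    ring
  rw [hexp, hyMd, hdMy]
  nlinarith [hdMd]
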